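/- Let q : ℕ^d → Matrix (Fin s) (Fin s) ℝ with q(0) = 0, and let u = Σ_{n≥0} q^(n) (pointwise finite). Then for any G : ℕ^d → Matrix (Fin s) (Fin s) ℝ, the multi-time Markov renewal equation L = G + q * L has the unique solution L = u * G. -/

import Mathlib

noncomputable def conv {d s : ℕ} (A B : (Fin d → ℕ) → Matrix (Fin s) (Fin s) ℝ) :
    (Fin d → ℕ) → Matrix (Fin s) (Fin s) ℝ :=
  fun k => ∑ l ∈ Finset.Iic k, A l * B (k - l)

noncomputable def oneSeq {d s : ℕ} : (Fin d → ℕ) → Matrix (Fin s) (Fin s) ℝ :=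
  fun k => if k = 0 then 1 else 0

noncomputable def convPow {d s : ℕ} (A : (Fin d → ℕ) → Matrix (Fin s) (Fin s) ℝ) :
    ℕ → (Fin d → ℕ) → Matrix (Fin s) (Fin s) ℝ
  | 0 => oneSeq
  | n + 1 => conv A (convPow A n)

lemma sum_sub_lt' {d : ℕ} (k l : Fin d → ℕ) (h : l ≤ k) (hne : l ≠ 0) :
    ∑ i, (k - l) i < ∑ i, k i := by
  obtain ⟨j, hj⟩ := Function.ne_iff.mp hne
  refine Finset.sum_lt_sum (fun i _ => ?_) ⟨j, Finset.mem_univ j, ?_⟩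
  · have h2 : l i ≤ k i := h i; show k i - l i ≤ k i; omega
  · have h2 : l j ≤ k j := h j
    simp only [Pi.zero_apply] at hj; show k j - l j < k j; omega

lemma convPow_eq_zero {d s : ℕ} (q : (Fin d → ℕ) → Matrix (Fin s) (Fin s) ℝ)
    (h0 : q 0 = 0) : ∀ n k, ∑ i, k i < n → convPow q n k = 0 := by
  intro n
  induction n with
  | zero => intro k hk; omega
  | succ n ih =>
    intro k hk
    show conv q (convPow q n) k = 0
    apply Finset.sum_eq_zero
    intro l hl
    by_cases hl0 : l = 0
    · subst hl0; rw [h0, zero_mul]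
    · rw [ih (k - l) (by
        have := sum_sub_lt' k l (Finset.mem_Iic.mp hl) hl0; omega), mul_zero]

lemma conv_oneSeq_left {d s : ℕ} (G : (Fin d → ℕ) → Matrix (Fin s) (Fin s) ℝ) :
    conv oneSeq G = G := by
  funext k
  show ∑ l ∈ Finset.Iic k, oneSeq l * G (k - l) = G k
  rw [Finset.sum_eq_single 0]
  · simp [oneSeq]
  · intro l _ hl0; simp [oneSeq, hl0]
  · intro h; exact absurd (Finset.mem_Iic.mpr zero_le) h

lemma conv_add_left {d s : ℕ} (A B C : (Fin d → ℕ) → Matrix (Fin s) (Fin s) ℝ) :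
    conv (A + B) C = conv A C + conv B C := by
  funext k; simp [conv, add_mul, Finset.sum_add_distrib]

lemma conv_sub_right {d s : ℕ} (A B C : (Fin d → ℕ) → Matrix (Fin s) (Fin s) ℝ) :
    conv A (B - C) = conv A B - conv A C := by
  funext k; simp [conv, mul_sub, Finset.sum_sub_distrib]

lemma conv_assoc {d s : ℕ} (A B C : (Fin d → ℕ) → Matrix (Fin s) (Fin s) ℝ) :
    conv (conv A B) C = conv A (conv B C) := by
  funext k
  show ∑ l ∈ Finset.Iic k, (∑ m ∈ Finset.Iic l, A m * B (l - m)) * C (k - l)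
      = ∑ m ∈ Finset.Iic k, A m * ∑ j ∈ Finset.Iic (k - m), B j * C ((k - m) - j)
  simp only [Finset.sum_mul, Finset.mul_sum]
  rw [Finset.sum_sigma', Finset.sum_sigma']
  refine Finset.sum_bij' (fun p _ => ⟨p.2, p.1 - p.2⟩) (fun p _ => ⟨p.1 + p.2, p.1⟩)
    ?_ ?_ ?_ ?_ ?_
  · rintro ⟨l, m⟩ hp
    simp only [Finset.mem_sigma, Finset.mem_Iic] at hp ⊢
    refine ⟨le_trans hp.2 hp.1, fun i => ?_⟩
    have h1 : l i ≤ k i := hp.1 i; have h2 : m i ≤ l i := hp.2 i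
    show l i - m i ≤ k i - m i; omega
  · rintro ⟨m, j⟩ hp
    simp only [Finset.mem_sigma, Finset.mem_Iic] at hp ⊢
    constructor
    · intro i; have h1 : m i ≤ k i := hp.1 i; have h2 : j i ≤ k i - m i := hp.2 i
      show m i + j i ≤ k i; omega
    · intro i; show m i ≤ m i + j i; omega
  · rintro ⟨l, m⟩ hp
    simp only [Finset.mem_sigma, Finset.mem_Iic] at hp
    have h3 : m + (l - m) = l := funext fun i => by
      have h2 : m i ≤ l i := hp.2 i; show m i + (l i - m i) = l i; omega
    show (⟨m + (l - m), m⟩ : Σ _ : Fin d → ℕ, Fin d → ℕ) = ⟨l, m⟩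
    rw [h3]
  · rintro ⟨m, j⟩ hp
    have h3 : (m + j) - m = j := funext fun i => by
      show (m i + j i) - m i = j i; omega
    show (⟨m, (m + j) - m⟩ : Σ _ : Fin d → ℕ, Fin d → ℕ) = ⟨m, j⟩
    rw [h3]
  · rintro ⟨l, m⟩ hp
    simp only [Finset.mem_sigma, Finset.mem_Iic] at hp
    have e2 : (k - m) - (l - m) = k - l := funext fun i => by
      have h1 : l i ≤ k i := hp.1 i; have h2 : m i ≤ l i := hp.2 i
      show (k i - m i) - (l i - m i) = k i - l i; omega
    rw [e2, mul_assoc]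

lemma conv_fixed_zero {d s : ℕ} (q : (Fin d → ℕ) → Matrix (Fin s) (Fin s) ℝ)
    (h0 : q 0 = 0) (M : (Fin d → ℕ) → Matrix (Fin s) (Fin s) ℝ)
    (hM : M = conv q M) : M = 0 := by
  have H : ∀ N k, ∑ i, k i = N → M k = 0 := by
    intro N
    induction N using Nat.strong_induction_on with
    | _ N ih =>
      intro k hk
      rw [hM]
      apply Finset.sum_eq_zero
      intro l hl
      by_cases hl0 : l = 0
      · subst hl0; rw [h0, zero_mul]
      · rw [ih (∑ i, (k - l) i)
          (by rw [← hk]; exact sum_sub_lt' k l (Finset.mem_Iic.mp hl) hl0) _ rfl,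
          mul_zero]
  funext k
  exact H _ k rfl

theorem markov_renewal_equation_solution {d s : ℕ}
    (q : (Fin d → ℕ) → Matrix (Fin s) (Fin s) ℝ) (h0 : q 0 = 0)
    (u : (Fin d → ℕ) → Matrix (Fin s) (Fin s) ℝ)
    (hu : u = fun k => ∑ n ∈ Finset.range (∑ i, k i + 1), convPow q n k)
    (G : (Fin d → ℕ) → Matrix (Fin s) (Fin s) ℝ) :
    conv u G = G + conv q (conv u G) ∧
    ∀ L : (Fin d → ℕ) → Matrix (Fin s) (Fin s) ℝ,
      L = G + conv q L → L = conv u G := by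
  have u_spec : ∀ (k : Fin d → ℕ) (N : ℕ), ∑ i, k i < N →
      u k = ∑ n ∈ Finset.range N, convPow q n k := by
    intro k N hN
    rw [hu]
    exact Finset.sum_subset (Finset.range_subset_range.mpr (by omega))
      (fun n _ hn => convPow_eq_zero q h0 n k (by simp at hn; omega))
  have u_rec : u = oneSeq + conv q u := by
    funext k
    have hc : conv q u k = ∑ n ∈ Finset.range (∑ i, k i), convPow q (n + 1) k := by
      show ∑ l ∈ Finset.Iic k, q l * u (k - l) = _
      have step : ∀ l ∈ Finset.Iic k,
          q l * u (k - l) = q l * ∑ n ∈ Finset.range (∑ i, k i), convPow q n (k - l) := by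
        intro l hl
        by_cases hl0 : l = 0
        · subst hl0; rw [h0, zero_mul, zero_mul]
        · rw [u_spec (k - l) _ (sum_sub_lt' k l (Finset.mem_Iic.mp hl) hl0)]
      rw [Finset.sum_congr rfl step]
      simp only [Finset.mul_sum]
      rw [Finset.sum_comm]
      rfl
    have := u_spec k (∑ i, k i + 1) (by omega)
    rw [Pi.add_apply, hc, this, Finset.sum_range_succ']
    show _ = oneSeq k + _
    rw [add_comm]
    rfl
  have hrec : conv u G = G + conv q (conv u G) := by
    calc conv u G = conv (oneSeq + conv q u) G := by rw [← u_rec]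
    _ = conv oneSeq G + conv (conv q u) G := conv_add_left _ _ _
    _ = G + conv q (conv u G) := by rw [conv_oneSeq_left, conv_assoc]
  refine ⟨hrec, fun L hL => ?_⟩
  have hz : L - conv u G = conv q (L - conv u G) := by
    rw [conv_sub_right]
    nth_rewrite 1 [hL]
    nth_rewrite 1 [hrec]
    abel
  have := conv_fixed_zero q h0 _ hz
  have := sub_eq_zero.mp this
  exact this
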